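/- Let (μ*, λ*, x*) be a 2D-eigentriplet of Hermitian (A,C) such that λ* is a simple eigenvalue of A - μ*C with corresponding differentiable eigenpair (λ(μ), x(μ)) satisfying λ(μ*) = λ*, x(μ*) = x*, x(μ)^H x'(μ) = 0. Let x'* = x'(μ*) and assume x'* ≠ 0. Set Ṽ* = [x*, x'*/‖x'*‖]. Then Ṽ* has orthonormal columns, (Ṽ*^H C Ṽ*)₁₁ = 0, (Ṽ*^H C Ṽ*)₁₂ = λ''(μ*)/(-2‖x'*‖), and det(Ṽ*^H C Ṽ*) = -(λ''(μ*)/(2‖x'*‖))² ≤ 0; in particular if λ''(μ*) ≠ 0 then Ṽ*^H C Ṽ* is indefinite. -/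

import Mathlib

open Matrix

noncomputable def vecEnorm {m : ℕ} (x : Fin m → ℂ) : ℝ :=
  Real.sqrt (star x ⬝ᵥ x).re

theorem simple_eigentriplet_projected_C {n : ℕ}
    (A C : Matrix (Fin n) (Fin n) ℂ) (hA : A.IsHermitian) (hC : C.IsHermitian)
    (lam : ℝ → ℝ) (x : ℝ → Fin n → ℂ)
    (lam' : ℝ → ℝ) (x' : ℝ → Fin n → ℂ) (lam'' : ℝ → ℝ)
    (hlam : ∀ μ : ℝ, HasDerivAt lam (lam' μ) μ)
    (hx : ∀ μ : ℝ, HasDerivAt x (x' μ) μ)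
    (hlam' : ∀ μ : ℝ, HasDerivAt lam' (lam'' μ) μ)
    (heig : ∀ μ : ℝ, (A - (μ : ℂ) • C) *ᵥ x μ = (lam μ : ℂ) • x μ)
    (hunit : ∀ μ : ℝ, star (x μ) ⬝ᵥ x μ = 1)
    (hgauge : ∀ μ : ℝ, star (x μ) ⬝ᵥ x' μ = 0)
    (μs : ℝ) (hiso : star (x μs) ⬝ᵥ (C *ᵥ x μs) = 0)
    (hxp : x' μs ≠ 0)
    (Vt : Matrix (Fin n) (Fin 2) ℂ)
    (hVt : Vt = Matrix.of fun i (j : Fin 2) =>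
      if j = 0 then x μs i else x' μs i / (vecEnorm (x' μs) : ℂ)) :
    Vtᴴ * Vt = 1 ∧
    (Vtᴴ * C * Vt) 0 0 = 0 ∧
    (Vtᴴ * C * Vt) 0 1 = (lam'' μs : ℂ) / (-2 * (vecEnorm (x' μs) : ℂ)) ∧
    (Vtᴴ * C * Vt).det = -(((lam'' μs / (2 * vecEnorm (x' μs))) ^ 2 : ℝ) : ℂ) ∧
    (lam'' μs ≠ 0 →
      (∃ y : Fin 2 → ℂ, 0 < (star y ⬝ᵥ ((Vtᴴ * C * Vt) *ᵥ y)).re) ∧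
      (∃ y : Fin 2 → ℂ, (star y ⬝ᵥ ((Vtᴴ * C * Vt) *ᵥ y)).re < 0)) := by
  have hxi : ∀ μ i, HasDerivAt (fun ν => x ν i) (x' μ i) μ := fun μ i => hasDerivAt_pi.mp (hx μ) i
  -- derivative of quadratic forms
  have hdot : ∀ (M : Matrix (Fin n) (Fin n) ℂ) (μ : ℝ),
      HasDerivAt (fun ν => star (x ν) ⬝ᵥ (M *ᵥ x ν))
        (star (x' μ) ⬝ᵥ (M *ᵥ x μ) + star (x μ) ⬝ᵥ (M *ᵥ x' μ)) μ := by
    intro M μ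
    have h : ∀ i (_ : i ∈ Finset.univ), HasDerivAt (fun ν => star (x ν i) * (M *ᵥ x ν) i)
        (star (x' μ i) * (M *ᵥ x μ) i + star (x μ i) * (M *ᵥ x' μ) i) μ := by
      intro i _
      have h1 : HasDerivAt (fun ν => (M *ᵥ x ν) i) ((M *ᵥ x' μ) i) μ := by
        simp only [mulVec, dotProduct]
        exact HasDerivAt.fun_sum fun j _ => (hxi μ j).const_mul (M i j)
      exact ((hxi μ i).star).mul h1
    simpa [dotProduct, Finset.sum_add_distrib] using HasDerivAt.fun_sum h
  -- Hermitian transfer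
  have hherm : ∀ (M : Matrix (Fin n) (Fin n) ℂ), M.IsHermitian → ∀ (u v : Fin n → ℂ),
      star u ⬝ᵥ (M *ᵥ v) = star (M *ᵥ u) ⬝ᵥ v := by
    intro M hM u v
    rw [dotProduct_mulVec, star_mulVec, hM.eq]
  have hAC : ∀ μ : ℝ, (A - (μ : ℂ) • C).IsHermitian := by
    intro μ
    simp only [Matrix.IsHermitian, conjTranspose_sub, conjTranspose_smul, hA.eq, hC.eq,
      Complex.star_def, Complex.conj_ofReal]
  have hgauge' : ∀ μ, star (x' μ) ⬝ᵥ x μ = 0 := by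
    intro μ
    rw [star_dotProduct, hgauge, star_zero]
  -- first derivative identity
  have hq : ∀ μ : ℝ, ((lam' μ : ℂ)) = - (star (x μ) ⬝ᵥ (C *ᵥ x μ)) := by
    intro μ
    have hfun : ∀ ν : ℝ, ((lam ν : ℂ)) = star (x ν) ⬝ᵥ (A *ᵥ x ν) - (ν:ℂ) * (star (x ν) ⬝ᵥ (C *ᵥ x ν)) := by
      intro ν
      have h := congrArg (fun v => star (x ν) ⬝ᵥ v) (heig ν)
      simp only [sub_mulVec, smul_mulVec, dotProduct_sub, dotProduct_smul, smul_eq_mul,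
        hunit ν, mul_one] at h
      linear_combination -h
    have hR : HasDerivAt (fun ν : ℝ => star (x ν) ⬝ᵥ (A *ᵥ x ν) - (ν:ℂ) * (star (x ν) ⬝ᵥ (C *ᵥ x ν)))
        ((star (x' μ) ⬝ᵥ (A *ᵥ x μ) + star (x μ) ⬝ᵥ (A *ᵥ x' μ))
          - ((1:ℂ) * (star (x μ) ⬝ᵥ (C *ᵥ x μ))
            + (μ:ℂ) * (star (x' μ) ⬝ᵥ (C *ᵥ x μ) + star (x μ) ⬝ᵥ (C *ᵥ x' μ)))) μ := by
      have hid : HasDerivAt (fun ν : ℝ => (ν:ℂ)) (1:ℂ) μ := by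
        simpa using (hasDerivAt_id μ).ofReal_comp
      exact (hdot A μ).sub (hid.mul (hdot C μ))
    have hL : HasDerivAt (fun ν : ℝ => ((lam ν : ℂ))) ((lam' μ : ℂ)) μ := (hlam μ).ofReal_comp
    rw [show (fun ν : ℝ => ((lam ν : ℂ))) = _ from funext hfun] at hL
    have hD := hL.unique hR
    have e1 : star (x' μ) ⬝ᵥ (A *ᵥ x μ) - (μ:ℂ) * (star (x' μ) ⬝ᵥ (C *ᵥ x μ)) = 0 := by
      have h := congrArg (fun v => star (x' μ) ⬝ᵥ v) (heig μ)
      simp only [sub_mulVec, smul_mulVec, dotProduct_sub, dotProduct_smul, smul_eq_mul,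
        hgauge' μ, mul_zero] at h
      linear_combination h
    have e2 : star (x μ) ⬝ᵥ (A *ᵥ x' μ) - (μ:ℂ) * (star (x μ) ⬝ᵥ (C *ᵥ x' μ)) = 0 := by
      have h1 : star (x μ) ⬝ᵥ ((A - (μ:ℂ)•C) *ᵥ x' μ) = star ((A - (μ:ℂ)•C) *ᵥ x μ) ⬝ᵥ x' μ :=
        hherm _ (hAC μ) _ _
      rw [heig μ] at h1
      simp only [sub_mulVec, smul_mulVec, dotProduct_sub, dotProduct_smul, smul_eq_mul,
        star_smul, smul_dotProduct, hgauge μ, mul_zero, Complex.star_def, Complex.conj_ofReal] at h1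
      linear_combination h1
    linear_combination hD + e1 + e2
  have hq2 : (lam'' μs : ℂ) = -(star (x' μs) ⬝ᵥ (C *ᵥ x μs) + star (x μs) ⬝ᵥ (C *ᵥ x' μs)) := by
    have hL : HasDerivAt (fun ν : ℝ => ((lam' ν : ℂ))) ((lam'' μs : ℂ)) μs := (hlam' μs).ofReal_comp
    rw [show (fun ν : ℝ => ((lam' ν : ℂ))) = (fun ν => -(star (x ν) ⬝ᵥ (C *ᵥ x ν))) from funext hq] at hL
    exact hL.unique ((hdot C μs).neg)
  have hl0 : (lam' μs : ℂ) = 0 := by rw [hq, hiso, neg_zero]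
  -- derivative of the eigen-equation at μs
  have hveq : C *ᵥ x μs = (A *ᵥ x' μs) - (μs:ℂ) • (C *ᵥ x' μs) - (lam μs : ℂ) • x' μs := by
    funext i
    have hLfun : ∀ ν : ℝ, (∑ j, (A i j - (ν:ℂ) * C i j) * x ν j) = (lam ν : ℂ) * x ν i := by
      intro ν
      have h := congrFun (heig ν) i
      simpa [mulVec, dotProduct, Matrix.sub_apply, Matrix.smul_apply, smul_eq_mul, sub_mul] using h
    have hLd : HasDerivAt (fun ν : ℝ => ∑ j, (A i j - (ν:ℂ) * C i j) * x ν j)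
        (∑ j, (-(C i j) * x μs j + (A i j - (μs:ℂ) * C i j) * x' μs j)) μs := by
      apply HasDerivAt.fun_sum
      intro j _
      have h1 : HasDerivAt (fun ν : ℝ => A i j - (ν:ℂ) * C i j) (-(C i j)) μs := by
        have hid : HasDerivAt (fun ν : ℝ => (ν:ℂ)) (1:ℂ) μs := by
          simpa using (hasDerivAt_id μs).ofReal_comp
        simpa using (hid.mul_const (C i j)).const_sub (A i j)
      exact h1.mul (hxi μs j)
    have hRd : HasDerivAt (fun ν : ℝ => (lam ν : ℂ) * x ν i)
        ((lam' μs : ℂ) * x μs i + (lam μs : ℂ) * x' μs i) μs :=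
      ((hlam μs).ofReal_comp).mul (hxi μs i)
    rw [show (fun ν : ℝ => ∑ j, (A i j - (ν:ℂ) * C i j) * x ν j)
        = (fun ν => (lam ν : ℂ) * x ν i) from funext hLfun] at hLd
    have huniq := hLd.unique hRd
    have hsum : ∑ j, (-(C i j) * x μs j + (A i j - (μs:ℂ) * C i j) * x' μs j)
        = -((C *ᵥ x μs) i) + ((A *ᵥ x' μs) i - (μs:ℂ) * (C *ᵥ x' μs) i) := by
      simp only [mulVec, dotProduct, Finset.sum_add_distrib, Finset.sum_sub_distrib, sub_mul,
        Finset.mul_sum, neg_mul, Finset.sum_neg_distrib, mul_assoc]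
    rw [hsum, hl0] at huniq
    simp only [Pi.sub_apply, Pi.smul_apply, smul_eq_mul]
    linear_combination -huniq
  -- c is real
  set c : ℂ := star (x μs) ⬝ᵥ (C *ᵥ x' μs) with hc_def
  have hcconj : star (x' μs) ⬝ᵥ (C *ᵥ x μs) = star c := by
    rw [star_dotProduct, ← hherm C hC]
  have hself_conj : ∀ (M : Matrix (Fin n) (Fin n) ℂ), M.IsHermitian → ∀ v : Fin n → ℂ,
      star (star v ⬝ᵥ (M *ᵥ v)) = star v ⬝ᵥ (M *ᵥ v) := by
    intro M hM v
    conv_lhs => rw [hherm M hM v v]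
    rw [← star_dotProduct]
  have hcreal : star c = c := by
    have hSI : star (star (x' μs) ⬝ᵥ x' μs) = star (x' μs) ⬝ᵥ x' μs :=
      (star_dotProduct (x' μs) (x' μs)).symm
    have h2 : star (star (x' μs) ⬝ᵥ (C *ᵥ x μs)) = star (x' μs) ⬝ᵥ (C *ᵥ x μs) := by
      rw [hveq]
      simp only [dotProduct_sub, dotProduct_smul, smul_dotProduct, smul_eq_mul, star_sub,
        star_mul', hself_conj A hA (x' μs), hself_conj C hC (x' μs), hSI,
        Complex.star_def, Complex.conj_ofReal]
    have h3 := congrArg star h2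
    rw [star_star] at h3
    rw [hcconj] at h3
    rw [star_star] at h3
    exact h3
  have hcval : c = -((lam'' μs : ℂ))/2 := by
    rw [hcconj, hcreal] at hq2
    linear_combination hq2/2
  -- norm facts
  set t : ℝ := vecEnorm (x' μs) with ht_def
  have hdotreal : star (x' μs) ⬝ᵥ x' μs = ((∑ k, Complex.normSq (x' μs k) : ℝ) : ℂ) := by
    push_cast
    exact Finset.sum_congr rfl fun k _ => Complex.normSq_eq_conj_mul_self.symm
  have hre_pos : 0 < (star (x' μs) ⬝ᵥ x' μs).re := by
    rw [hdotreal, Complex.ofReal_re]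
    obtain ⟨k, hk⟩ := Function.ne_iff.mp hxp
    exact Finset.sum_pos' (fun i _ => Complex.normSq_nonneg _)
      ⟨k, Finset.mem_univ k, Complex.normSq_pos.mpr hk⟩
  have htpos : 0 < t := Real.sqrt_pos.mpr hre_pos
  have ht2 : star (x' μs) ⬝ᵥ x' μs = ((t^2 : ℝ) : ℂ) := by
    rw [ht_def, vecEnorm, Real.sq_sqrt hre_pos.le, hdotreal, Complex.ofReal_re]
  have htne : (t : ℂ) ≠ 0 := by exact_mod_cast ne_of_gt htpos
  -- column identification
  have hcol0 : (fun k => Vt k 0) = x μs := by funext k; simp [hVt]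
  have hcol1 : (fun k => Vt k 1) = fun k => x' μs k / (t:ℂ) := by
    funext k; simp [hVt]
  -- entry formulas
  have hentC : ∀ i j : Fin 2, (Vtᴴ * C * Vt) i j
      = star (fun k => Vt k i) ⬝ᵥ (C *ᵥ fun k => Vt k j) := by
    intro i j
    simp only [Matrix.mul_apply, conjTranspose_apply, dotProduct, mulVec, Pi.star_apply,
      Finset.sum_mul, Finset.mul_sum]
    rw [Finset.sum_comm]
    exact Finset.sum_congr rfl fun k _ => Finset.sum_congr rfl fun l _ => by ring
  have hentI : ∀ i j : Fin 2, (Vtᴴ * Vt) i j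
      = star (fun k => Vt k i) ⬝ᵥ (fun k => Vt k j) := by
    intro i j
    simp [Matrix.mul_apply, conjTranspose_apply, dotProduct]
  -- scaled vector helpers
  have hmul_scale : (C *ᵥ fun k => x' μs k / (t:ℂ)) = fun i => (C *ᵥ x' μs) i / (t:ℂ) := by
    funext i
    simp only [mulVec, dotProduct, div_eq_mul_inv, Finset.sum_mul]
    exact Finset.sum_congr rfl fun j _ => by ring
  have hstar_div : star (fun k => x' μs k / (t:ℂ)) = fun k => (starRingEnd ℂ) (x' μs k) / (t:ℂ) := by
    funext k
    simp [Complex.star_def, map_div₀, Complex.conj_ofReal]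
  -- the four C-entries we need
  have hM00 : (Vtᴴ * C * Vt) 0 0 = 0 := by
    rw [hentC, hcol0]; exact hiso
  have hM01 : (Vtᴴ * C * Vt) 0 1 = c / (t:ℂ) := by
    rw [hentC, hcol0, hcol1, hmul_scale]
    have h1 : star (x μs) ⬝ᵥ (fun i => (C *ᵥ x' μs) i / (t:ℂ))
        = (star (x μs) ⬝ᵥ (C *ᵥ x' μs)) / (t:ℂ) := by
      simp only [dotProduct, Pi.star_apply, mul_div_assoc, Finset.sum_div]
    rw [h1, ← hc_def]
  have hM10 : (Vtᴴ * C * Vt) 1 0 = c / (t:ℂ) := by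
    rw [hentC, hcol0, hcol1, hstar_div]
    have : (fun k => (starRingEnd ℂ) (x' μs k) / (t:ℂ)) ⬝ᵥ (C *ᵥ x μs)
        = (star (x' μs) ⬝ᵥ (C *ᵥ x μs)) / (t:ℂ) := by
      simp [dotProduct, div_mul_eq_mul_div, Finset.sum_div]
    rw [this, hcconj, hcreal]
  have hbr : c / (t:ℂ) = (((-(lam'' μs))/(2*t) : ℝ) : ℂ) := by
    rw [hcval]; push_cast; ring
  refine ⟨?_, hM00, ?_, ?_, ?_⟩
  · -- orthonormality
    have hxx : ∑ k, (starRingEnd ℂ) (x' μs k) * x' μs k = ((t^2 : ℝ) : ℂ) := by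
      simpa [dotProduct] using ht2
    have hI00 : (Vtᴴ * Vt) 0 0 = 1 := by rw [hentI, hcol0]; exact hunit μs
    have hI01 : (Vtᴴ * Vt) 0 1 = 0 := by
      rw [hentI, hcol0, hcol1]
      have h1 : star (x μs) ⬝ᵥ (fun k => x' μs k / (t:ℂ)) = (star (x μs) ⬝ᵥ x' μs) / (t:ℂ) := by
        simp only [dotProduct, Pi.star_apply, mul_div_assoc, Finset.sum_div]
      rw [h1, hgauge]; simp
    have hI10 : (Vtᴴ * Vt) 1 0 = 0 := by
      rw [hentI, hcol0, hcol1, hstar_div]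
      have h1 : (fun k => (starRingEnd ℂ) (x' μs k) / (t:ℂ)) ⬝ᵥ x μs
          = (star (x' μs) ⬝ᵥ x μs) / (t:ℂ) := by
        simp only [dotProduct, Pi.star_apply, div_mul_eq_mul_div, Finset.sum_div,
          Complex.star_def]
      rw [h1, hgauge']; simp
    have hI11 : (Vtᴴ * Vt) 1 1 = 1 := by
      rw [hentI, hcol1, hstar_div]
      have h1 : (fun k => (starRingEnd ℂ) (x' μs k) / (t:ℂ)) ⬝ᵥ (fun k => x' μs k / (t:ℂ))
          = (∑ k, (starRingEnd ℂ) (x' μs k) * x' μs k) / ((t:ℂ) * (t:ℂ)) := by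
        simp only [dotProduct, Pi.star_apply, div_mul_div_comm, Finset.sum_div]
      rw [h1, hxx]
      push_cast
      field_simp
    ext i j
    fin_cases i <;> fin_cases j
    · simpa using hI00
    · simpa using hI01
    · simpa using hI10
    · simpa using hI11
  · -- the (0,1) entry
    rw [hM01, hcval]
    have h2t : (-2 : ℂ) * (t:ℂ) ≠ 0 := by
      intro h
      rcases mul_eq_zero.mp h with h | h
      · norm_num at h
      · exact htne h
    field_simp
  · -- determinant
    rw [Matrix.det_fin_two, hM00, hM01, hM10, hcval]
    push_cast
    field_simp
    ring
  · -- indefiniteness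
    intro hl2
    set b : ℝ := (-(lam'' μs))/(2*t) with hb_def
    have hbne : b ≠ 0 := by
      apply div_ne_zero (neg_ne_zero.mpr hl2)
      positivity
    have hb01 : (Vtᴴ * C * Vt) 0 1 = ((b : ℝ) : ℂ) := by rw [hM01, hbr]
    have hb10 : (Vtᴴ * C * Vt) 1 0 = ((b : ℝ) : ℂ) := by rw [hM10, hbr]
    set r : ℝ := ((Vtᴴ * C * Vt) 1 1).re with hr_def
    have key : ∀ s : ℝ, (star ![(s:ℂ),(1:ℂ)] ⬝ᵥ ((Vtᴴ * C * Vt) *ᵥ ![(s:ℂ),(1:ℂ)])).re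
        = 2*s*b + r := by
      intro s
      have hform : star ![(s:ℂ),(1:ℂ)] ⬝ᵥ ((Vtᴴ * C * Vt) *ᵥ ![(s:ℂ),(1:ℂ)])
          = (starRingEnd ℂ) ((s:ℂ)) * ((Vtᴴ * C * Vt) 0 0 * (s:ℂ) + (Vtᴴ * C * Vt) 0 1 * 1)
            + (starRingEnd ℂ) (1:ℂ) * ((Vtᴴ * C * Vt) 1 0 * (s:ℂ) + (Vtᴴ * C * Vt) 1 1 * 1) := by
        simp [dotProduct, mulVec, Fin.sum_univ_two]
      rw [hform, hM00, hb01, hb10, Complex.conj_ofReal]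
      simp [Complex.add_re, Complex.mul_re, Complex.ofReal_re, Complex.ofReal_im, hr_def]
      ring
    constructor
    · refine ⟨![(((1 - r)/(2*b) : ℝ) : ℂ), 1], ?_⟩
      have hval : 2 * ((1 - r)/(2*b)) * b + r = 1 := by field_simp; ring
      rw [key, hval]
      norm_num
    · refine ⟨![(((-1 - r)/(2*b) : ℝ) : ℂ), 1], ?_⟩
      have hval : 2 * ((-1 - r)/(2*b)) * b + r = -1 := by field_simp; ring
      rw [key, hval]
      norm_num
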